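/- For integers n, s with 0 ≤ s ≤ ⌊n/3⌋ + 1, the number a(n,s) of lattice paths inside the strip 0 ≤ x ≤ n+2−2s from (0,0) to (n+2−2s, n+2) with steps (x,y)→(x±1,y+1) equals binomial(n,s) − 2·binomial(n,s−2) + binomial(n,s−4). -/
import Mathlib


open Finset
open scoped Classical
noncomputable section

/-- Position (x-coordinate) after `t` steps of the path `p`, where `true` encodes a
right step `(x,y) ↦ (x+1,y+1)` and `false` a left step `(x,y) ↦ (x-1,y+1)`. -/
def pathPos {m : ℕ} (p : Fin m → Bool) (t : ℕ) : ℤ :=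
  ∑ j : Fin m, if (j : ℕ) < t then (if p j then (1 : ℤ) else -1) else 0

/-- Generally admissible paths of size `(n,s)`: `n+2` diagonal steps starting at `(0,0)`,
the 0-th and the last step going right, with exactly `s` left steps
(hence ending at `(n+2-2s, n+2)`). -/
def admissible (n s : ℕ) : Finset (Fin (n + 2) → Bool) :=
  Finset.univ.filter (fun p =>
    (∀ j : Fin (n + 2), (j : ℕ) = 0 → p j = true) ∧
    (∀ j : Fin (n + 2), (j : ℕ) = n + 1 → p j = true) ∧
    (Finset.univ.filter (fun j => p j = false)).card = s)

/-- The path crosses the line `x = 0`, i.e. reaches x-coordinate `-1` at some time. -/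
def crossesLeft {m : ℕ} (p : Fin m → Bool) : Prop :=
  ∃ t ∈ Finset.range (m + 1), pathPos p t = -1

/-- A path of size `(n,s)` crosses the line `x = n+2-2s`,
i.e. reaches x-coordinate `n+3-2s` at some time. -/
def crossesRight (n s : ℕ) (p : Fin (n + 2) → Bool) : Prop :=
  ∃ t ∈ Finset.range (n + 3), pathPos p t = (n : ℤ) + 3 - 2 * s

/-- `L n s`: the number of generally admissible paths of size `(n,s)`
crossing the line `x = 0`. -/
def L (n s : ℕ) : ℕ := ((admissible n s).filter (fun p => crossesLeft p)).card

/-- Constrained lattice paths: `n+2` diagonal steps from `(0,0)` to `(n+2-2s, n+2)`,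
staying inside the strip `0 ≤ x ≤ n+2-2s`.  (`n` is allowed to be a negative integer,
with the convention that there are `max (n+2) 0` steps.) -/
def aPaths (n : ℤ) (s : ℕ) : Finset (Fin (n + 2).toNat → Bool) :=
  Finset.univ.filter (fun p =>
    pathPos p (n + 2).toNat = n + 2 - 2 * s ∧
    ∀ t ∈ Finset.range ((n + 2).toNat + 1),
      0 ≤ pathPos p t ∧ pathPos p t ≤ n + 2 - 2 * s)

/-- `a n s`: the number of lattice paths from `(0,0)` to `(n+2-2s, n+2)` with steps
`(x,y) ↦ (x±1, y+1)` staying inside the strip `0 ≤ x ≤ n+2-2s`. -/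
def a (n : ℤ) (s : ℕ) : ℕ := (aPaths n s).card

/-- Binomial coefficient `C(n,k)` with integer lower index, zero when `k < 0`. -/
def binom (n : ℕ) (k : ℤ) : ℕ := if k < 0 then 0 else n.choose k.toNat

/-- `b W H`: the number of lattice paths from `(0,0)` to `(W,H)` with steps
`(x,y) ↦ (x±1,y+1)` staying in the strip `0 ≤ x ≤ W`, whose first and last steps go
right, and whose intermediate steps come in consecutive same-direction pairs
`(1,2), (3,4), …, (H-3,H-2)`. -/
def bPaths (W H : ℕ) : Finset (Fin H → Bool) :=
  Finset.univ.filter (fun p =>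
    (∀ j : Fin H, (j : ℕ) = 0 → p j = true) ∧
    (∀ j : Fin H, (j : ℕ) = H - 1 → p j = true) ∧
    (∀ j1 j2 : Fin H, (j1 : ℕ) % 2 = 1 → (j2 : ℕ) = (j1 : ℕ) + 1 →
      (j1 : ℕ) + 1 ≤ H - 2 → p j1 = p j2) ∧
    pathPos p H = (W : ℤ) ∧
    ∀ t ∈ Finset.range (H + 1), 0 ≤ pathPos p t ∧ pathPos p t ≤ (W : ℤ))

def b (W H : ℕ) : ℕ := (bPaths W H).card

/-! ### Auxiliary machinery: reflection arguments for lattice paths -/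

namespace Refl
variable {m : ℕ}

lemma pathPos_zero (p : Fin m → Bool) : pathPos p 0 = 0 := by
  simp [pathPos]

lemma pathPos_congr {p q : Fin m → Bool} {t : ℕ}
    (h : ∀ j : Fin m, (j : ℕ) < t → p j = q j) : pathPos p t = pathPos q t := by
  unfold pathPos
  refine Finset.sum_congr rfl fun j _ => ?_
  by_cases hj : (j : ℕ) < t
  · simp [hj, h j hj]
  · simp [hj]

lemma pathPos_sub (p : Fin m → Bool) {u t : ℕ} (h : u ≤ t) :
    pathPos p t = pathPos p u +
      ∑ j : Fin m, if u ≤ (j : ℕ) ∧ (j : ℕ) < t then (if p j then (1 : ℤ) else -1) else 0 := by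
  unfold pathPos
  rw [← Finset.sum_add_distrib]
  refine Finset.sum_congr rfl fun j _ => ?_
  split_ifs <;> omega

lemma pathPos_stable (p : Fin m → Bool) {t : ℕ} (h : m ≤ t) :
    pathPos p t = pathPos p m := by
  unfold pathPos
  refine Finset.sum_congr rfl fun j _ => ?_
  have h1 : (j : ℕ) < t := lt_of_lt_of_le j.isLt h
  simp [h1, j.isLt]

lemma pathPos_succ (p : Fin m → Bool) (t : ℕ) (ht : t < m) :
    pathPos p (t + 1) = pathPos p t + (if p ⟨t, ht⟩ then 1 else -1) := by
  rw [pathPos_sub p (Nat.le_succ t)]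
  congr 1
  have key : ∀ j : Fin m, (t ≤ (j : ℕ) ∧ (j : ℕ) < t + 1) ↔ j = ⟨t, ht⟩ := by
    intro j
    constructor
    · rintro ⟨h1, h2⟩; apply Fin.ext; simp only [Fin.val_mk]; omega
    · rintro rfl; simp
  simp_rw [key]
  rw [Finset.sum_ite_eq' Finset.univ (⟨t, ht⟩ : Fin m)]
  simp

lemma pathPos_step_ge (p : Fin m → Bool) (t : ℕ) :
    pathPos p t - 1 ≤ pathPos p (t + 1) := by
  by_cases ht : t < m
  · rw [pathPos_succ p t ht]; split_ifs <;> omega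
  · rw [pathPos_stable p (by omega : m ≤ t + 1), pathPos_stable p (by omega : m ≤ t)]; omega

lemma pathPos_neg (p : Fin m → Bool) (t : ℕ) :
    pathPos (fun j => !(p j)) t = -pathPos p t := by
  unfold pathPos
  rw [← Finset.sum_neg_distrib]
  refine Finset.sum_congr rfl fun j _ => ?_
  by_cases hj : (j : ℕ) < t
  · cases hp : p j <;> simp [hj, hp]
  · simp [hj]

lemma ivt_down (p : Fin m → Bool) (c : ℤ) :
    ∀ (d u : ℕ), c ≤ pathPos p u → pathPos p (u + d) ≤ c →
      ∃ t, u ≤ t ∧ t ≤ u + d ∧ pathPos p t = c := by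
  intro d
  induction d with
  | zero =>
    intro u h1 h2
    exact ⟨u, le_refl _, le_refl _, le_antisymm h2 h1⟩
  | succ d ih =>
    intro u h1 h2
    by_cases hc : pathPos p u = c
    · exact ⟨u, le_refl _, by omega, hc⟩
    · have h1' : c < pathPos p u := lt_of_le_of_ne h1 (Ne.symm hc)
      have hstep := pathPos_step_ge p u
      have h3 : c ≤ pathPos p (u + 1) := by omega
      have h4 : pathPos p (u + 1 + d) ≤ c := by
        have : u + 1 + d = u + (d + 1) := by omega
        rw [this]; exact h2
      obtain ⟨t, ht1, ht2, ht3⟩ := ih (u + 1) h3 h4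
      exact ⟨t, by omega, by omega, ht3⟩

/-- `p` reaches level `ℓ` at some time `≤ m`. -/
def hits (ℓ : ℤ) (p : Fin m → Bool) : Prop := ∃ t, t ≤ m ∧ pathPos p t = ℓ

lemma hits_of_le {p : Fin m → Bool} {c : ℤ} (hc : c ≤ 0) {t : ℕ} (ht : t ≤ m)
    (h : pathPos p t ≤ c) : hits c p := by
  obtain ⟨t', h1, h2, h3⟩ := ivt_down p c t 0 (by rw [pathPos_zero]; exact hc) (by simpa using h)
  exact ⟨t', by omega, h3⟩

lemma hits_of_ge {p : Fin m → Bool} {c : ℤ} (hc : 0 ≤ c) {t : ℕ} (ht : t ≤ m)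
    (h : c ≤ pathPos p t) : hits c p := by
  have h' : pathPos (fun j => !(p j)) t ≤ -c := by rw [pathPos_neg]; omega
  obtain ⟨t', h1, h2⟩ := hits_of_le (by omega : -c ≤ 0) ht h'
  rw [pathPos_neg] at h2
  exact ⟨t', h1, by omega⟩

/-- number of left (false) steps -/
def F (p : Fin m → Bool) : ℕ := (Finset.univ.filter (fun j => p j = false)).card

lemma pathPos_final (p : Fin m → Bool) : pathPos p m = (m : ℤ) - 2 * F p := by
  have h1 : pathPos p m = ∑ j : Fin m, (if p j then (1 : ℤ) else -1) := by
    unfold pathPos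
    exact Finset.sum_congr rfl fun j _ => by simp [j.isLt]
  have h2 : ∀ j : Fin m, (if p j then (1 : ℤ) else -1) = 1 - 2 * (if p j = false then (1:ℤ) else 0) := by
    intro j; cases hp : p j <;> simp [hp]
  rw [h1]
  simp_rw [h2]
  rw [Finset.sum_sub_distrib, ← Finset.mul_sum, Finset.sum_boole]
  simp [F, Finset.card_univ]

lemma window_bound (p : Fin m → Bool) {u v : ℕ} (h : u ≤ v) :
    pathPos p u - F p ≤ pathPos p v := by
  rw [pathPos_sub p h]
  have hb : ∀ j : Fin m, -(if p j = false then (1:ℤ) else 0) ≤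
      (if u ≤ (j : ℕ) ∧ (j : ℕ) < v then (if p j then (1 : ℤ) else -1) else 0) := by
    intro j
    cases hp : p j <;> split_ifs <;> simp_all
  have := Finset.sum_le_sum (fun j (_ : j ∈ univ) => hb j)
  rw [Finset.sum_neg_distrib, Finset.sum_boole] at this
  have hF : (univ.filter (fun j => p j = false)).card = F p := rfl
  rw [hF] at this
  linarith

lemma card_falses (k : ℕ) :
    (univ.filter (fun p : Fin m → Bool => F p = k)).card = m.choose k := by
  have h := Finset.card_powersetCard k (univ : Finset (Fin m))
  rw [Finset.card_univ, Fintype.card_fin] at h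
  rw [← h]
  apply Finset.card_bij (fun p _ => univ.filter (fun j => p j = false))
  · intro p hp
    rw [Finset.mem_powersetCard]
    exact ⟨Finset.subset_univ _, (Finset.mem_filter.mp hp).2⟩
  · intro p hp p' hp' heq
    funext j
    have := Finset.ext_iff.mp heq j
    simp only [Finset.mem_filter, Finset.mem_univ, true_and] at this
    cases h1 : p j <;> cases h2 : p' j <;> simp_all
  · intro A hA
    rw [Finset.mem_powersetCard] at hA
    refine ⟨fun j => !(decide (j ∈ A)), ?_, ?_⟩
    · rw [Finset.mem_filter]
      refine ⟨Finset.mem_univ _, ?_⟩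
      unfold F
      rw [show (univ.filter (fun j => (!(decide (j ∈ A))) = false)) = A by
        ext j; simp]
      exact hA.2
    · ext j; simp

lemma card_endpoint (k : ℕ) :
    (univ.filter (fun p : Fin m → Bool => pathPos p m = (m : ℤ) - 2 * k)).card = m.choose k := by
  rw [← card_falses k]
  congr 1
  apply Finset.filter_congr
  intro p _
  rw [pathPos_final]
  omega

def ft (ℓ : ℤ) (p : Fin m → Bool) : ℕ := sInf {t | pathPos p t = ℓ}

lemma ft_pos {ℓ : ℤ} {p : Fin m → Bool} (h : hits ℓ p) : pathPos p (ft ℓ p) = ℓ := by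
  obtain ⟨t, ht, hp⟩ := h
  exact Nat.sInf_mem (⟨t, hp⟩ : Set.Nonempty {t | pathPos p t = ℓ})

lemma ft_le {ℓ : ℤ} {p : Fin m → Bool} {t : ℕ} (ht : pathPos p t = ℓ) : ft ℓ p ≤ t :=
  Nat.sInf_le ht

lemma ft_le_m {ℓ : ℤ} {p : Fin m → Bool} (h : hits ℓ p) : ft ℓ p ≤ m := by
  obtain ⟨t, ht, hp⟩ := h
  exact le_trans (ft_le hp) ht

def reflP (ℓ : ℤ) (p : Fin m → Bool) : Fin m → Bool :=
  fun j => if (j : ℕ) < ft ℓ p then p j else !(p j)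

lemma reflP_pos_le (ℓ : ℤ) (p : Fin m → Bool) {t : ℕ} (ht : t ≤ ft ℓ p) :
    pathPos (reflP ℓ p) t = pathPos p t := by
  apply pathPos_congr
  intro j hj
  unfold reflP
  rw [if_pos (by omega)]

lemma reflP_pos_ge {ℓ : ℤ} {p : Fin m → Bool} (h : hits ℓ p) {t : ℕ} (ht : ft ℓ p ≤ t) :
    pathPos (reflP ℓ p) t = 2 * ℓ - pathPos p t := by
  have h0 : pathPos p (ft ℓ p) = ℓ := ft_pos h
  have h0' : pathPos (reflP ℓ p) (ft ℓ p) = ℓ := by rw [reflP_pos_le ℓ p (le_refl _)]; exact h0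
  rw [pathPos_sub (reflP ℓ p) ht, pathPos_sub p ht, h0, h0']
  have hsum : ∑ j : Fin m, (if ft ℓ p ≤ (j : ℕ) ∧ (j : ℕ) < t then (if reflP ℓ p j then (1:ℤ) else -1) else 0)
      = -∑ j : Fin m, (if ft ℓ p ≤ (j : ℕ) ∧ (j : ℕ) < t then (if p j then (1:ℤ) else -1) else 0) := by
    rw [← Finset.sum_neg_distrib]
    refine Finset.sum_congr rfl fun j _ => ?_
    by_cases hj : ft ℓ p ≤ (j : ℕ) ∧ (j : ℕ) < t
    · rw [if_pos hj, if_pos hj]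
      have : reflP ℓ p j = !(p j) := by unfold reflP; rw [if_neg (by omega)]
      rw [this]
      cases p j <;> simp
    · rw [if_neg hj, if_neg hj]; ring
  rw [hsum]
  ring

lemma ft_reflP {ℓ : ℤ} {p : Fin m → Bool} (h : hits ℓ p) : ft ℓ (reflP ℓ p) = ft ℓ p := by
  have hmem : pathPos (reflP ℓ p) (ft ℓ p) = ℓ := by
    rw [reflP_pos_le ℓ p (le_refl _)]; exact ft_pos h
  apply le_antisymm (ft_le hmem)
  by_contra hc
  push_neg at hc
  have h2 : pathPos (reflP ℓ p) (ft ℓ (reflP ℓ p)) = ℓ := ft_pos ⟨ft ℓ p, ft_le_m h, hmem⟩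
  rw [reflP_pos_le ℓ p (le_of_lt hc)] at h2
  exact absurd (ft_le h2) (by omega)

lemma hits_reflP {ℓ : ℤ} {p : Fin m → Bool} (h : hits ℓ p) : hits ℓ (reflP ℓ p) :=
  ⟨ft ℓ p, ft_le_m h, by rw [reflP_pos_le ℓ p (le_refl _)]; exact ft_pos h⟩

lemma reflP_reflP {ℓ : ℤ} {p : Fin m → Bool} (h : hits ℓ p) : reflP ℓ (reflP ℓ p) = p := by
  have hf := ft_reflP h
  funext j
  show (if (j : ℕ) < ft ℓ (reflP ℓ p) then reflP ℓ p j else !(reflP ℓ p j)) = p j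
  rw [hf]
  unfold reflP
  split_ifs with hj
  · rfl
  · simp

lemma reflP_end {ℓ : ℤ} {p : Fin m → Bool} (h : hits ℓ p) :
    pathPos (reflP ℓ p) m = 2 * ℓ - pathPos p m :=
  reflP_pos_ge h (ft_le_m h)

/-- Single-barrier reflection: paths ending at `e` that hit a low level `ℓ`
are in bijection with paths ending at `2ℓ - e`. -/
lemma card_refl (ℓ e : ℤ) (hℓ : ℓ ≤ 0) (he : 2 * ℓ - e ≤ ℓ) :
    (univ.filter fun p : Fin m → Bool => pathPos p m = e ∧ hits ℓ p).card
      = (univ.filter fun p : Fin m → Bool => pathPos p m = 2 * ℓ - e).card := by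
  apply Finset.card_bij' (fun p _ => reflP ℓ p) (fun q _ => reflP ℓ q)
  · intro p hp
    rw [Finset.mem_filter] at hp ⊢
    obtain ⟨_, he1, hh⟩ := hp
    exact ⟨Finset.mem_univ _, by rw [reflP_end hh, he1]⟩
  · intro q hq
    rw [Finset.mem_filter] at hq ⊢
    obtain ⟨_, he1⟩ := hq
    have hh : hits ℓ q := hits_of_le hℓ (le_refl m) (by rw [he1]; exact he)
    refine ⟨Finset.mem_univ _, by rw [reflP_end hh, he1]; ring, hits_reflP hh⟩
  · intro p hp
    rw [Finset.mem_filter] at hp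
    exact reflP_reflP hp.2.2
  · intro q hq
    rw [Finset.mem_filter] at hq
    have hh : hits ℓ q := hits_of_le hℓ (le_refl m) (by rw [hq.2]; exact he)
    exact reflP_reflP hh

/-- Negation bijection. -/
lemma card_neg (e ℓ : ℤ) :
    (univ.filter fun p : Fin m → Bool => pathPos p m = e ∧ hits ℓ p).card
      = (univ.filter fun p : Fin m → Bool => pathPos p m = -e ∧ hits (-ℓ) p).card := by
  apply Finset.card_bij' (fun p _ => fun j => !(p j)) (fun q _ => fun j => !(q j))
  · intro p hp
    rw [Finset.mem_filter] at hp ⊢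
    obtain ⟨_, he1, t, ht, hpt⟩ := hp
    exact ⟨Finset.mem_univ _, by rw [pathPos_neg, he1], t, ht, by rw [pathPos_neg, hpt]⟩
  · intro q hq
    rw [Finset.mem_filter] at hq ⊢
    obtain ⟨_, he1, t, ht, hqt⟩ := hq
    refine ⟨Finset.mem_univ _, by rw [pathPos_neg, he1]; ring, t, ht, by rw [pathPos_neg, hqt]; ring⟩
  · intro p _; funext j; simp
  · intro q _; funext j; simp

end Refl
namespace Refl
variable {m : ℕ}

/-- Double reflection: paths ending at `W` hitting both `-1` and `W+1` are in bijection
with paths ending at `-2-W` hitting `-W-3`, provided a path cannot afford to hit `W+1`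
before `-1` (guaranteed by `3s ≤ m+1`). -/
lemma card_double (s : ℕ) (hs : 3 * s ≤ m + 1) (hm : (m : ℤ) - 2 * s = W) :
    (univ.filter fun p : Fin m → Bool => pathPos p m = W ∧ hits (-1) p ∧ hits (W + 1) p).card
      = (univ.filter fun q : Fin m → Bool => pathPos q m = -2 - W ∧ hits (-W - 3) q).card := by
  have hW : (0 : ℤ) ≤ W := by omega
  apply Finset.card_bij' (fun p _ => reflP (-1) p) (fun q _ => reflP (-1) q)
  · intro p hp
    rw [Finset.mem_filter] at hp ⊢
    obtain ⟨_, hpe, hL, u, hu, hpu⟩ := hp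
    have hFp : (F p : ℤ) = (s : ℤ) := by
      have := pathPos_final p
      rw [hpe] at this
      omega
    have hfu : ft (-1) p ≤ u := by
      by_contra hc
      push_neg at hc
      have hv := ft_pos hL
      have hwin := window_bound p (le_of_lt hc)
      rw [hpu, hv] at hwin
      omega
    refine ⟨Finset.mem_univ _, ?_, u, hu, ?_⟩
    · rw [reflP_end hL, hpe]; ring
    · rw [reflP_pos_ge hL hfu, hpu]; ring
  · intro q hq
    rw [Finset.mem_filter] at hq ⊢
    obtain ⟨_, hqe, u, hu, hqu⟩ := hq
    have hL : hits (-1) q := hits_of_le (by norm_num) (le_refl m) (by rw [hqe]; omega)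
    have hfu : ft (-1) q ≤ u := by
      by_contra hc
      push_neg at hc
      obtain ⟨t', _, ht2, ht3⟩ := ivt_down q (-1) u 0
        (by rw [pathPos_zero]; norm_num) (by rw [zero_add, hqu]; omega)
      have := ft_le ht3
      omega
    refine ⟨Finset.mem_univ _, ?_, hits_reflP hL, u, hu, ?_⟩
    · rw [reflP_end hL, hqe]; ring
    · rw [reflP_pos_ge hL hfu, hqu]; ring
  · intro p hp
    rw [Finset.mem_filter] at hp
    exact reflP_reflP hp.2.2.1
  · intro q hq
    rw [Finset.mem_filter] at hq
    have hL : hits (-1) q := hits_of_le (by norm_num) (le_refl m) (by rw [hq.2.1]; omega)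
    exact reflP_reflP hL

/-- Master counting lemma: number of paths in the strip. -/
lemma master (m s : ℕ) (hs : 3 * s ≤ m + 1) :
    (((univ.filter fun p : Fin m → Bool =>
        pathPos p m = (m : ℤ) - 2 * s ∧
        ∀ t ∈ Finset.range (m + 1),
          0 ≤ pathPos p t ∧ pathPos p t ≤ (m : ℤ) - 2 * s).card : ℤ))
      = (m.choose s : ℤ) - 2 * (m.choose (m + 1 - s) : ℤ) + (m.choose (m + 2 - s) : ℤ) := by
  have h2s : 2 * s ≤ m := by omega
  set W : ℤ := (m : ℤ) - 2 * s with hWdef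
  have hW : (0 : ℤ) ≤ W := by rw [hWdef]; push_cast; omega
  have hset : (univ.filter fun p : Fin m → Bool =>
        pathPos p m = W ∧ ∀ t ∈ Finset.range (m + 1), 0 ≤ pathPos p t ∧ pathPos p t ≤ W)
      = (univ.filter fun p : Fin m → Bool =>
        pathPos p m = W ∧ ¬(hits (-1) p ∨ hits (W + 1) p)) := by
    ext p
    simp only [Finset.mem_filter, Finset.mem_univ, true_and]
    constructor
    · rintro ⟨h1, h2⟩
      refine ⟨h1, ?_⟩
      rintro (⟨t, ht, hv⟩ | ⟨t, ht, hv⟩)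
      · have := (h2 t (Finset.mem_range.mpr (by omega))).1; omega
      · have := (h2 t (Finset.mem_range.mpr (by omega))).2; omega
    · rintro ⟨h1, h2⟩
      push_neg at h2
      refine ⟨h1, fun t ht => ?_⟩
      rw [Finset.mem_range] at ht
      constructor
      · by_contra hc
        push_neg at hc
        exact h2.1 (hits_of_le (c := -1) (t := t) (by norm_num) (by omega) (by omega))
      · by_contra hc
        push_neg at hc
        exact h2.2 (hits_of_ge (c := W + 1) (t := t) (by omega) (by omega) (by omega))
  have c0 : (univ.filter fun p : Fin m → Bool => pathPos p m = W).card = m.choose s :=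
    card_endpoint s
  have keyL : (2 * (-1 : ℤ) - W) = (m : ℤ) - 2 * ((m + 1 - s : ℕ) : ℤ) := by
    have : ((m + 1 - s : ℕ) : ℤ) = (m : ℤ) + 1 - s := by omega
    rw [this, hWdef]; ring
  have cL : (univ.filter fun p : Fin m → Bool =>
      pathPos p m = W ∧ hits (-1) p).card = m.choose (m + 1 - s) := by
    rw [card_refl (-1) W (by norm_num) (by omega)]
    simp only [keyL]
    exact card_endpoint (m + 1 - s)
  have keyR : (2 * (-(W + 1)) - (-W) : ℤ) = (m : ℤ) - 2 * ((m + 1 - s : ℕ) : ℤ) := by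
    have : ((m + 1 - s : ℕ) : ℤ) = (m : ℤ) + 1 - s := by omega
    rw [this, hWdef]; ring
  have cR : (univ.filter fun p : Fin m → Bool =>
      pathPos p m = W ∧ hits (W + 1) p).card = m.choose (m + 1 - s) := by
    rw [card_neg W (W + 1), card_refl (-(W + 1)) (-W) (by omega) (by omega)]
    simp only [keyR]
    exact card_endpoint (m + 1 - s)
  have keyD : (2 * (-W - 3) - (-2 - W) : ℤ) = (m : ℤ) - 2 * ((m + 2 - s : ℕ) : ℤ) := by
    have : ((m + 2 - s : ℕ) : ℤ) = (m : ℤ) + 2 - s := by omega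
    rw [this, hWdef]; ring
  have cLR : (univ.filter fun p : Fin m → Bool =>
      pathPos p m = W ∧ hits (-1) p ∧ hits (W + 1) p).card = m.choose (m + 2 - s) := by
    rw [card_double s hs hWdef.symm]
    rw [card_refl (-W - 3) (-2 - W) (by omega) (by omega)]
    simp only [keyD]
    exact card_endpoint (m + 2 - s)
  -- assembly
  set S := univ.filter fun p : Fin m → Bool => pathPos p m = W with hS
  set U := univ.filter fun p : Fin m → Bool => pathPos p m = W ∧ hits (-1) p with hU
  set V := univ.filter fun p : Fin m → Bool => pathPos p m = W ∧ hits (W + 1) p with hV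
  set X := univ.filter fun p : Fin m → Bool =>
    pathPos p m = W ∧ ¬(hits (-1) p ∨ hits (W + 1) p) with hX
  set Y := univ.filter fun p : Fin m → Bool =>
    pathPos p m = W ∧ (hits (-1) p ∨ hits (W + 1) p) with hY
  set Z := univ.filter fun p : Fin m → Bool =>
    pathPos p m = W ∧ hits (-1) p ∧ hits (W + 1) p with hZ
  have e1 : Y.card + X.card = S.card := by
    have h := Finset.card_filter_add_card_filter_not
      (s := S) (p := fun p => hits (-1) p ∨ hits (W + 1) p)
    have hx1 : S.filter (fun p => hits (-1) p ∨ hits (W + 1) p) = Y := by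
      ext p
      simp only [hS, hY, Finset.mem_filter, Finset.mem_univ, true_and]
      try tauto
    have hx2 : S.filter (fun p => ¬(hits (-1) p ∨ hits (W + 1) p)) = X := by
      ext p
      simp only [hS, hX, Finset.mem_filter, Finset.mem_univ, true_and]
      try tauto
    rw [hx1, hx2] at h
    exact h
  have e2 : Y.card + Z.card = U.card + V.card := by
    have h := Finset.card_union_add_card_inter U V
    have hx1 : U ∪ V = Y := by
      ext p
      simp only [hU, hV, hY, Finset.mem_union, Finset.mem_filter, Finset.mem_univ, true_and]
      try tauto
    have hx2 : U ∩ V = Z := by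
      ext p
      simp only [hU, hV, hZ, Finset.mem_inter, Finset.mem_filter, Finset.mem_univ, true_and]
      try tauto
    rw [hx1, hx2] at h
    exact h
  rw [hset]
  have hSc : S.card = m.choose s := c0
  have hUc : U.card = m.choose (m + 1 - s) := cL
  have hVc : V.card = m.choose (m + 1 - s) := cR
  omega

end Refl

namespace Refl

lemma binom_eq_choose (n k : ℕ) : binom n (k : ℤ) = n.choose k := by
  simp [binom]

lemma pascal2 (n : ℕ) (k : ℤ) :
    (binom (n + 2) k : ℤ) = binom n k + 2 * binom n (k - 1) + binom n (k - 2) := by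
  rcases lt_or_ge k 0 with hk | hk
  · simp [binom, hk, show k - 1 < 0 by omega, show k - 2 < 0 by omega]
  · lift k to ℕ using hk
    rcases k with _ | k
    · norm_num [binom]
    · rcases k with _ | i
      · first
          | norm_num [binom]
          | (norm_num [binom]; push_cast; omega)
      · have h1 : ((i + 1 + 1 : ℕ) : ℤ) - 1 = ((i + 1 : ℕ) : ℤ) := by push_cast; ring
        have h2 : ((i + 1 + 1 : ℕ) : ℤ) - 2 = ((i : ℕ) : ℤ) := by push_cast; ring
        rw [h1, h2, binom_eq_choose, binom_eq_choose, binom_eq_choose, binom_eq_choose]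
        have key : (n + 2).choose (i + 2) = n.choose (i + 2) + 2 * n.choose (i + 1) + n.choose i := by
          rw [show n + 2 = (n + 1) + 1 from rfl, Nat.choose_succ_succ (n + 1) (i + 1),
            Nat.choose_succ_succ n i, Nat.choose_succ_succ n (i + 1)]
          ring
        push_cast [show i + 1 + 1 = i + 2 from rfl, key]
        ring

end Refl

/-- for `0 ≤ s ≤ ⌊n/3⌋ + 1`,
`a(n,s) = C(n,s) - 2 C(n,s-2) + C(n,s-4)`. -/
theorem stmt8 (n s : ℕ) (h : s ≤ n / 3 + 1) :
    (a (n : ℤ) s : ℤ) =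
      (n.choose s : ℤ) - 2 * binom n ((s : ℤ) - 2) + binom n ((s : ℤ) - 4) := by
  have hs3 : 3 * s ≤ n + 3 := by omega
  have htn : ((n : ℤ) + 2).toNat = n + 2 := by omega
  unfold a aPaths
  simp only [htn]
  simp only [show ((n : ℤ) + 2) = ((n + 2 : ℕ) : ℤ) from by push_cast; ring]
  have hM := Refl.master (n + 2) s (by omega)
  -- bridge the binomials
  have b0 : ((n + 2).choose s : ℤ) = (binom (n + 2) (s : ℤ) : ℤ) := by
    rw [Refl.binom_eq_choose]
  have b1 : ((n + 2).choose (n + 2 + 1 - s) : ℤ) = (binom (n + 2) ((s : ℤ) - 1) : ℤ) := by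
    rcases Nat.eq_zero_or_pos s with rfl | hs
    · rw [Nat.choose_eq_zero_of_lt (by omega)]
      simp [binom]
    · have h1 : (s : ℤ) - 1 = ((s - 1 : ℕ) : ℤ) := by omega
      rw [h1, Refl.binom_eq_choose]
      rw [show n + 2 + 1 - s = (n + 2) - (s - 1) from by omega,
        Nat.choose_symm (show s - 1 ≤ n + 2 from by omega)]
  have b2 : ((n + 2).choose (n + 2 + 2 - s) : ℤ) = (binom (n + 2) ((s : ℤ) - 2) : ℤ) := by
    rcases lt_or_ge s 2 with hs | hs
    · rw [Nat.choose_eq_zero_of_lt (by omega)]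
      rw [show ((s : ℤ) - 2) = -(((2 - s : ℕ) : ℤ)) from by omega]
      simp [binom]
      omega
    · have h1 : (s : ℤ) - 2 = ((s - 2 : ℕ) : ℤ) := by omega
      rw [h1, Refl.binom_eq_choose]
      rw [show n + 2 + 2 - s = (n + 2) - (s - 2) from by omega,
        Nat.choose_symm (show s - 2 ≤ n + 2 from by omega)]
  have P0 := Refl.pascal2 n (s : ℤ)
  have P1 := Refl.pascal2 n ((s : ℤ) - 1)
  have P2 := Refl.pascal2 n ((s : ℤ) - 2)
  rw [show (s : ℤ) - 1 - 1 = (s : ℤ) - 2 from by ring,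
    show (s : ℤ) - 1 - 2 = (s : ℤ) - 3 from by ring] at P1
  rw [show (s : ℤ) - 2 - 1 = (s : ℤ) - 3 from by ring,
    show (s : ℤ) - 2 - 2 = (s : ℤ) - 4 from by ring] at P2
  have hc : (binom n (s : ℤ) : ℤ) = (n.choose s : ℤ) := by rw [Refl.binom_eq_choose]
  have hfin : ((n + 2).choose s : ℤ) - 2 * ((n + 2).choose (n + 2 + 1 - s) : ℤ)
      + ((n + 2).choose (n + 2 + 2 - s) : ℤ)
      = (n.choose s : ℤ) - 2 * (binom n ((s : ℤ) - 2) : ℤ) + (binom n ((s : ℤ) - 4) : ℤ) := by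
    rw [b0, b1, b2]
    linarith
  rw [hfin] at hM
  convert hM using 2
  congr 1
  ext p
  simp only [Finset.mem_filter]
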